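/- Let K ⊆ ℝ^n be compact, A ⊆ ℕ^n finite, and suppose ℝ[x]_A is K-full (there exists p ∈ ℝ[x]_A with p > 0 on K). If an A-tms y ∈ ℝ^A admits no representing measure supported in K, then there exists a polynomial p ∈ ℝ[x]_A with p ≥ 0 on K and the Riesz functional value L_y(p) = Σ_{α∈A} p_α y_α < 0. -/

import Mathlib

open MeasureTheory

private lemma sum_comp_embedding {ι κ M : Type*} [Fintype ι] [Fintype κ] [AddCommMonoid M]
    (e : ι ↪ κ) (g : κ → M) (hg : ∀ i, (∀ j, e j ≠ i) → g i = 0) :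
    ∑ i, g i = ∑ j, g (e j) := by
  classical
  have h1 : ∑ i ∈ Finset.univ.image e, g i = ∑ j, g (e j) :=
    Finset.sum_image (fun a _ b _ h => e.injective h)
  rw [← h1]
  refine (Finset.sum_subset (Finset.subset_univ _) fun i _ hi => ?_).symm
  exact hg i fun j hj => hi (hj ▸ Finset.mem_image_of_mem e (Finset.mem_univ j))

lemma aux_isCompact_convexHull {E : Type*} [NormedAddCommGroup E] [NormedSpace ℝ E]
    [FiniteDimensional ℝ E] {s : Set E} (hs : IsCompact s) :
    IsCompact (convexHull ℝ s) := by
  classical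
  rcases s.eq_empty_or_nonempty with rfl | ⟨x₀, hx₀⟩
  · simpa [convexHull_empty] using isCompact_empty
  set d := Module.finrank ℝ E + 1 with hd
  set F : (Fin d → ℝ) × (Fin d → E) → E := fun p => ∑ i, p.1 i • p.2 i with hF
  have hFc : Continuous F := by
    apply continuous_finset_sum
    intro i _
    exact ((continuous_apply i).comp continuous_fst).smul
      ((continuous_apply i).comp continuous_snd)
  have hT : IsCompact ((stdSimplex ℝ (Fin d)) ×ˢ (Set.univ.pi fun _ : Fin d => s)) :=
    (isCompact_stdSimplex ℝ _).prod (isCompact_univ_pi fun _ => hs)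
  have key : convexHull ℝ s =
      F '' ((stdSimplex ℝ (Fin d)) ×ˢ (Set.univ.pi fun _ : Fin d => s)) := by
    apply Set.Subset.antisymm
    · intro x hx
      obtain ⟨ι, hfin, z, w, hzs, hai, hwpos, hw1, hcomb⟩ :=
        eq_pos_convex_span_of_mem_convexHull hx
      have hcard : Fintype.card ι ≤ d := by
        have h1 := hai.card_le_finrank_succ
        have h2 := Submodule.finrank_le (vectorSpan ℝ (Set.range z))
        omega
      obtain ⟨e⟩ : Nonempty (ι ↪ Fin d) :=
        Function.Embedding.nonempty_of_card_le (by simpa using hcard)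
      set w' : Fin d → ℝ := Function.extend e w 0 with hw'
      set z' : Fin d → E := Function.extend e z (fun _ => x₀) with hz'
      have hwe : ∀ j, w' (e j) = w j := fun j => e.injective.extend_apply w 0 j
      have hze : ∀ j, z' (e j) = z j := fun j => e.injective.extend_apply z _ j
      have hwnot : ∀ i, (∀ j, e j ≠ i) → w' i = 0 := by
        intro i hi
        rw [hw', Function.extend_def, dif_neg]
        · rfl
        · rintro ⟨j, rfl⟩; exact hi j rfl
      refine ⟨(w', z'), ⟨?_, ?_⟩, ?_⟩
      · constructor
        · intro i
          show 0 ≤ w' i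
          by_cases h : ∃ j, e j = i
          · obtain ⟨j, rfl⟩ := h; rw [hwe]; exact (hwpos j).le
          · rw [hwnot i (fun j hj => h ⟨j, hj⟩)]
        · show ∑ i, w' i = 1
          rw [sum_comp_embedding e w' hwnot]
          simpa only [hwe] using hw1
      · intro i _
        show z' i ∈ s
        simp only [hz', Function.extend_def]
        split
        · next h => exact hzs ⟨_, rfl⟩
        · exact hx₀
      · rw [hF]
        simp only
        rw [sum_comp_embedding e (fun i => w' i • z' i)
            (fun i hi => by show w' i • z' i = 0; rw [hwnot i hi, zero_smul])]
        simp only [hwe, hze]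
        exact hcomb
    · rintro _ ⟨⟨w, z⟩, ⟨⟨hw0, hw1⟩, hz⟩, rfl⟩
      exact (convex_convexHull ℝ s).sum_mem (fun i _ => hw0 i) hw1
        (fun i _ => subset_convexHull ℝ s (hz i (Set.mem_univ i)))
  rw [key]
  exact hT.image hFc

/-- If `K` is compact, `ℝ[x]_A` is `K`-full, and the `A`-tms `y`
admits no representing measure supported in `K`, then there is `p ∈ ℝ[x]_A`
nonnegative on `K` with `L_y(p) < 0`. -/
theorem exists_separating_poly_of_no_measure
    (n : ℕ) (A : Finset (Fin n → ℕ)) (K : Set (Fin n → ℝ)) (hK : IsCompact K)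
    (hfull : ∃ p : (Fin n → ℕ) → ℝ, ∀ x ∈ K, 0 < ∑ α ∈ A, p α * ∏ j, x j ^ α j)
    (y : (Fin n → ℕ) → ℝ)
    (hno : ¬ ∃ μ : Measure (Fin n → ℝ), μ Kᶜ = 0 ∧
      ∀ α ∈ A, Integrable (fun x => ∏ j, x j ^ α j) μ ∧
        y α = ∫ x, ∏ j, x j ^ α j ∂μ) :
    ∃ p : (Fin n → ℕ) → ℝ,
      (∀ x ∈ K, 0 ≤ ∑ α ∈ A, p α * ∏ j, x j ^ α j) ∧
      ∑ α ∈ A, p α * y α < 0 := by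
  classical
  obtain ⟨p₀, hp₀⟩ := hfull
  let v : (Fin n → ℝ) → (↥A → ℝ) := fun x β => ∏ j, x j ^ (β : Fin n → ℕ) j
  let ℓ : (↥A → ℝ) → ℝ := fun z => ∑ β : ↥A, p₀ ↑β * z β
  have hℓv : ∀ x ∈ K, 0 < ℓ (v x) := by
    intro x hx
    have : ℓ (v x) = ∑ α ∈ A, p₀ α * ∏ j, x j ^ α j :=
      Finset.sum_coe_sort A (fun α => p₀ α * ∏ j, x j ^ α j)
    rw [this]
    exact hp₀ x hx
  -- the set of moment vectors of measures supported in K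
  set M : Set (↥A → ℝ) := {z | ∃ μ : Measure (Fin n → ℝ), μ Kᶜ = 0 ∧
      (∀ α ∈ A, Integrable (fun x => ∏ j, x j ^ α j) μ) ∧
      ∀ β : ↥A, z β = ∫ x, ∏ j, x j ^ (β : Fin n → ℕ) j ∂μ} with hMdef
  have hM0 : (0 : ↥A → ℝ) ∈ M :=
    ⟨0, by simp, fun α _ => integrable_zero_measure, fun β => by simp⟩
  have hMsmul : ∀ c : ℝ, 0 ≤ c → ∀ z ∈ M, c • z ∈ M := by
    rintro c hc z ⟨μ, hμ0, hint, hrep⟩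
    refine ⟨ENNReal.ofReal c • μ, ?_,
      fun α hα => (hint α hα).smul_measure ENNReal.ofReal_ne_top, fun β => ?_⟩
    · simp [Measure.smul_apply, hμ0]
    · show c * z β = _
      rw [integral_smul_measure, ENNReal.toReal_ofReal hc, hrep β, smul_eq_mul]
  have hMconv : Convex ℝ M := by
    rintro z₁ ⟨μ₁, h₁0, h₁i, h₁r⟩ z₂ ⟨μ₂, h₂0, h₂i, h₂r⟩ a b ha hb hab
    refine ⟨ENNReal.ofReal a • μ₁ + ENNReal.ofReal b • μ₂, ?_, fun α hα =>
      ((h₁i α hα).smul_measure ENNReal.ofReal_ne_top).add_measure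
        ((h₂i α hα).smul_measure ENNReal.ofReal_ne_top), fun β => ?_⟩
    · simp [Measure.add_apply, Measure.smul_apply, h₁0, h₂0]
    · show a * z₁ β + b * z₂ β = _
      rw [integral_add_measure ((h₁i ↑β β.2).smul_measure ENNReal.ofReal_ne_top)
            ((h₂i ↑β β.2).smul_measure ENNReal.ofReal_ne_top),
          integral_smul_measure, integral_smul_measure,
          ENNReal.toReal_ofReal ha, ENNReal.toReal_ofReal hb, h₁r β, h₂r β, smul_eq_mul,
          smul_eq_mul]
  have hvK : ∀ x ∈ K, v x ∈ M := by
    intro x hx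
    refine ⟨Measure.dirac x, ?_, fun α hα => ?_, fun β => ?_⟩
    · rw [Measure.dirac_apply' x hK.isClosed.measurableSet.compl,
        Set.indicator_of_notMem (by simpa using hx)]
    · exact (integrable_const _).congr (ae_eq_dirac _).symm
    · rw [integral_dirac]
  set D₀ : Set (↥A → ℝ) := (fun x => (ℓ (v x))⁻¹ • v x) '' K with hD₀def
  have hD₀M : D₀ ⊆ M := by
    rintro _ ⟨x, hx, rfl⟩
    exact hMsmul _ (inv_nonneg.mpr (hℓv x hx).le) _ (hvK x hx)
  have hvcont : Continuous v :=
    continuous_pi fun β => continuous_finset_prod _ fun j _ => (continuous_apply j).pow _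
  have hℓcont : Continuous ℓ :=
    continuous_finset_sum _ fun β _ => continuous_const.mul (continuous_apply (β : ↥A))
  have hD₀cpt : IsCompact D₀ :=
    hK.image_of_continuousOn
      ((((hℓcont.comp hvcont).continuousOn).inv₀ fun x hx => (hℓv x hx).ne').smul
        hvcont.continuousOn)
  set K' : Set (↥A → ℝ) := convexHull ℝ (D₀ ∪ {0}) with hK'def
  have hK'cpt : IsCompact K' := aux_isCompact_convexHull (hD₀cpt.union isCompact_singleton)
  have hK'M : K' ⊆ M :=
    convexHull_min (Set.union_subset hD₀M (by simpa using hM0)) hMconv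
  set yh : ↥A → ℝ := fun β => y ↑β with hyhdef
  set c : ℝ := (1 + |ℓ yh|)⁻¹ with hcdef
  have hc : 0 < c := by
    rw [hcdef]
    positivity
  set w : ↥A → ℝ := c • yh with hwdef
  have hwK' : w ∉ K' := by
    intro hw
    have hyM : yh ∈ M := by
      have h1 := hMsmul c⁻¹ (inv_nonneg.mpr hc.le) w (hK'M hw)
      rwa [hwdef, smul_smul, inv_mul_cancel₀ hc.ne', one_smul] at h1
    obtain ⟨μ, hμ0, hint, hrep⟩ := hyM
    exact hno ⟨μ, hμ0, fun α hα => ⟨hint α hα, hrep ⟨α, hα⟩⟩⟩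
  obtain ⟨f, u, hfw, hub⟩ :=
    geometric_hahn_banach_point_closed (convex_convexHull ℝ _) hK'cpt.isClosed hwK'
  have hu0 : u < 0 := by
    have h0K' : (0 : ↥A → ℝ) ∈ K' := subset_convexHull ℝ _ (Or.inr rfl)
    have := hub 0 h0K'
    simpa using this
  set p : (Fin n → ℕ) → ℝ := fun α => if h : α ∈ A then
      f (fun j => if (⟨α, h⟩ : ↥A) = j then (1 : ℝ) else 0) - u * p₀ α else 0 with hpdef
  have hkey : ∀ z : ↥A → ℝ, ∑ β : ↥A, p ↑β * z β = f z - u * ℓ z := by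
    intro z
    have hβ : ∀ β : ↥A, p ↑β = f (fun j => if β = j then (1 : ℝ) else 0) - u * p₀ ↑β := by
      intro β
      simp only [hpdef]
      rw [dif_pos β.2]
    calc ∑ β : ↥A, p ↑β * z β
        = ∑ β : ↥A, (z β * f (fun j => if β = j then (1 : ℝ) else 0) - u * (p₀ ↑β * z β)) := by
          refine Finset.sum_congr rfl fun β _ => ?_
          rw [hβ β]; ring
      _ = (∑ β : ↥A, z β * f (fun j => if β = j then (1 : ℝ) else 0))
            - u * ∑ β : ↥A, p₀ ↑β * z β := by
          rw [Finset.sum_sub_distrib, Finset.mul_sum]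
      _ = f z - u * ℓ z := by
          congr 1
          have hexp := LinearMap.pi_apply_eq_sum_univ (↑f : (↥A → ℝ) →ₗ[ℝ] ℝ) z
          simp only [ContinuousLinearMap.coe_coe, smul_eq_mul] at hexp
          rw [hexp]
  refine ⟨p, ?_, ?_⟩
  · intro x hx
    have h1 : ∑ α ∈ A, p α * ∏ j, x j ^ α j = ∑ β : ↥A, p ↑β * v x β := by
      rw [← Finset.sum_coe_sort A (fun α => p α * ∏ j, x j ^ α j)]
    rw [h1, hkey (v x)]
    have hmem : (ℓ (v x))⁻¹ • v x ∈ K' := subset_convexHull ℝ _ (Or.inl ⟨x, hx, rfl⟩)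
    have h2 := hub _ hmem
    rw [_root_.map_smul, smul_eq_mul] at h2
    have hL := hℓv x hx
    have h3 := mul_lt_mul_of_pos_left h2 hL
    rw [← mul_assoc, mul_inv_cancel₀ hL.ne', one_mul] at h3
    nlinarith [h3]
  · have h1 : ∑ α ∈ A, p α * y α = ∑ β : ↥A, p ↑β * yh β := by
      rw [← Finset.sum_coe_sort A (fun α => p α * y α)]
    rw [h1, hkey yh]
    have hfw' : c * f yh < u := by
      rw [hwdef, _root_.map_smul, smul_eq_mul] at hfw
      exact hfw
    have hpos : (0 : ℝ) < 1 + |ℓ yh| := by positivity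
    have h3 : c * ℓ yh < 1 := by
      calc c * ℓ yh ≤ c * |ℓ yh| := mul_le_mul_of_nonneg_left (le_abs_self _) hc.le
        _ < c * (1 + |ℓ yh|) := mul_lt_mul_of_pos_left (by linarith) hc
        _ = 1 := by rw [hcdef]; exact inv_mul_cancel₀ hpos.ne'
    have h5 := mul_lt_mul_of_neg_left h3 hu0
    rw [mul_one] at h5
    have h6 : c * (f yh - u * ℓ yh) < 0 := by nlinarith [hfw', h5]
    by_contra h
    push_neg at h
    nlinarith [mul_nonneg hc.le h]
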